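/- Let A be an associative topological algebra with commuting continuous derivations ∂₁,…,∂ₙ, H = k[T₁,…,Tₙ], and F(A) the H-module of continuous translation-invariant maps H → A. For a, b ∈ F(A) and f ∈ H define (a ₍f₎ b)(g) = a(f₍₁₎)·b(S(f₍₂₎)g), where Δ and S are the standard coproduct and antipode of H. Then a ₍f₎ b is again translation-invariant, i.e. (a ₍f₎ b)(∂g/∂Tᵢ) = ∂ᵢ((a ₍f₎ b)(g)) for all g ∈ H and all i. -/

import Mathlib

open MvPolynomial

/-- The topology on `H = k[T₁,…,Tₙ]` given by the powers of the augmentation ideal. -/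
noncomputable def Htop (k : Type*) [Field k] (n : ℕ) :
    TopologicalSpace (MvPolynomial (Fin n) k) :=
  (RingHom.ker (constantCoeff : MvPolynomial (Fin n) k →+* k)).adicTopology

/-- The antipode `S` of the Hopf algebra `H = k[T₁,…,Tₙ]`: `S(Tᵢ) = −Tᵢ`. -/
noncomputable def antipodeH (k : Type*) [Field k] (n : ℕ) :
    MvPolynomial (Fin n) k →ₐ[k] MvPolynomial (Fin n) k :=
  aeval fun i => -X i

/-- The coproduct `Δ(f) = f₍₁₎ ⊗ f₍₂₎` of `H = k[T₁,…,Tₙ]` (`Δ(Tᵢ) = Tᵢ⊗1 + 1⊗Tᵢ`),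
realised concretely: `k[T] ⊗ k[T] ≅ k[T ⊕ T] ≅ (k[T])[T]`, so `Δ(f)` is recorded as a
polynomial in the first group of variables whose coefficients (the second Sweedler
factors) lie in `H`. -/
noncomputable def sweedler {k : Type*} [Field k] {n : ℕ}
    (f : MvPolynomial (Fin n) k) :
    MvPolynomial (Fin n) (MvPolynomial (Fin n) k) :=
  sumAlgEquiv k (Fin n) (Fin n)
    ((aeval fun i => X (Sum.inl i) + X (Sum.inr i)) f)

/-- The conformal product `(a ₍f₎ b)(g) = Σ a(f₍₁₎) · b(S(f₍₂₎)·g)` on linear maps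
`H → A`, using the Sweedler decomposition `Δf = Σ f₍₁₎ ⊗ f₍₂₎`. -/
noncomputable def confProd {k : Type*} [Field k] {n : ℕ} {A : Type*}
    [Ring A] [Algebra k A]
    (a b : MvPolynomial (Fin n) k →ₗ[k] A) (f : MvPolynomial (Fin n) k) :
    MvPolynomial (Fin n) k →ₗ[k] A :=
  ∑ m ∈ (sweedler f).support,
    (LinearMap.mulLeft k (a (monomial m 1))) ∘ₗ b ∘ₗ
      (LinearMap.mulLeft k (antipodeH k n (coeff m (sweedler f))))


section Helpers

variable {k : Type*} [Field k] {n : ℕ}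

noncomputable def phiH (k : Type*) [Field k] (n : ℕ) :
    MvPolynomial (Fin n) k →ₐ[k] MvPolynomial (Fin n ⊕ Fin n) k :=
  aeval fun j => X (Sum.inl j) + X (Sum.inr j)


lemma pderiv_phiH (i : Fin n) (f : MvPolynomial (Fin n) k) :
    pderiv (Sum.inl i) (phiH k n f) = phiH k n (pderiv i f) ∧
    pderiv (Sum.inr i) (phiH k n f) = phiH k n (pderiv i f) := by
  induction f using MvPolynomial.induction_on with
  | C r => simp [phiH]
  | add p q hp hq =>
    exact ⟨by simp only [map_add, hp.1, hq.1], by simp only [map_add, hp.2, hq.2]⟩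
  | mul_X p j hp =>
    constructor <;>
    · simp only [map_mul, pderiv_mul, map_add, hp.1, hp.2]
      congr 1
      rcases eq_or_ne i j with h | h <;> simp [phiH, h, Pi.single_apply]

lemma pderiv_antipodeH (i : Fin n) (f : MvPolynomial (Fin n) k) :
    pderiv i (antipodeH k n f) = - antipodeH k n (pderiv i f) := by
  induction f using MvPolynomial.induction_on with
  | C r => simp [antipodeH]
  | add p q hp hq => simp only [map_add, hp, hq]; abel  

  | mul_X p j hp =>
    simp only [map_mul, pderiv_mul, map_add, hp]
    rcases eq_or_ne i j with h | h <;>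
      simp [antipodeH, h, Pi.single_apply] <;> ring

lemma pderiv_sumAlgEquiv (i : Fin n) (x : MvPolynomial (Fin n ⊕ Fin n) k) :
    pderiv i (sumAlgEquiv k (Fin n) (Fin n) x)
      = sumAlgEquiv k (Fin n) (Fin n) (pderiv (Sum.inl i) x) := by
  induction x using MvPolynomial.induction_on with
  | C r =>
    rw [pderiv_C, map_zero, ← algebraMap_eq, AlgEquiv.commutes, MvPolynomial.algebraMap_apply, pderiv_C]
  | add p q hp hq => simp only [map_add, hp, hq]
  | mul_X p s hp =>
    simp only [map_mul, pderiv_mul, map_add, hp]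
    rw [add_right_inj]
    rcases s with j | j
    · rcases eq_or_ne i j with h | h <;> simp [h, Pi.single_apply]
    · simp

lemma symm_monomial (m p : Fin n →₀ ℕ) (r : k) :
    (sumAlgEquiv k (Fin n) (Fin n)).symm (monomial m (monomial p r))
      = rename Sum.inl (monomial m (1:k)) * rename Sum.inr (monomial p r) := by
  apply (sumAlgEquiv k (Fin n) (Fin n)).injective
  rw [AlgEquiv.apply_symm_apply, map_mul]
  have h1 : (sumAlgEquiv k (Fin n) (Fin n)) (rename Sum.inl (monomial m (1:k)))
      = monomial m (1 : MvPolynomial (Fin n) k) := by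
    have key : (sumAlgEquiv k (Fin n) (Fin n)).toAlgHom.comp (rename Sum.inl)
        = aeval (R := k) X := by
      ext j
      simp
    have h := AlgHom.congr_fun key (monomial m (1:k))
    simp only [AlgHom.coe_comp, Function.comp_apply, AlgEquiv.toAlgHom_eq_coe,
      AlgHom.coe_coe, AlgEquiv.coe_toAlgHom] at h
    rw [h]
    simp [aeval_monomial, monomial_eq]
  have h2 : (sumAlgEquiv k (Fin n) (Fin n)) (rename Sum.inr (monomial p r))
      = C (monomial p r) := by
    have h := AlgHom.congr_fun (sumAlgEquiv_comp_rename_inr k (Fin n) (Fin n))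
      (monomial p r)
    simp only [AlgHom.coe_comp, Function.comp_apply, AlgEquiv.toAlgHom_eq_coe,
      AlgHom.coe_coe, AlgEquiv.coe_toAlgHom] at h
    rw [h]
    rfl
  rw [h1, h2, mul_comm, C_mul_monomial, mul_one]

lemma pderiv_inr_symm (i : Fin n) (m : Fin n →₀ ℕ) (c : MvPolynomial (Fin n) k) :
    pderiv (Sum.inr i) ((sumAlgEquiv k (Fin n) (Fin n)).symm (monomial m c))
      = (sumAlgEquiv k (Fin n) (Fin n)).symm (monomial m (pderiv i c)) := by
  induction c using MvPolynomial.induction_on' with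
  | monomial p r =>
    have hz : pderiv (Sum.inr i) (rename Sum.inl (monomial m (1:k))) = 0 := by
      classical
      apply pderiv_eq_zero_of_notMem_vars
      intro h
      obtain ⟨j, _, hj⟩ := Finset.mem_image.mp (vars_rename _ _ h)
      exact Sum.inl_ne_inr hj
    rw [symm_monomial, pderiv_mul, hz, zero_mul, zero_add,
      pderiv_rename Sum.inr_injective, pderiv_monomial, symm_monomial]
  | add p q hp hq =>
    simp only [map_add, hp, hq]


section ConfHelpers

variable {A : Type*} [Ring A] [Algebra k A]
  (a b : MvPolynomial (Fin n) k →ₗ[k] A) (g : MvPolynomial (Fin n) k) (i : Fin n)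

noncomputable def Th (Q : MvPolynomial (Fin n) (MvPolynomial (Fin n) k)) : A :=
  Finsupp.sum (AddMonoidAlgebra.coeff Q) fun m c => a (monomial m 1) * b (antipodeH k n c * g)

lemma Th_monomial (m : Fin n →₀ ℕ) (c : MvPolynomial (Fin n) k) :
    Th a b g (monomial m c) = a (monomial m 1) * b (antipodeH k n c * g) := by
  rw [Th, ← single_eq_monomial, AddMonoidAlgebra.coeff_single, Finsupp.sum_single_index]
  simp

lemma K1 (Q : MvPolynomial (Fin n) (MvPolynomial (Fin n) k)) :
    (Finsupp.sum (AddMonoidAlgebra.coeff Q) fun m c => a (pderiv i (monomial m 1)) * b (antipodeH k n c * g))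
      = Th a b g (pderiv i Q) := by
  induction Q using MvPolynomial.induction_on' with
  | monomial m c =>
    rw [← single_eq_monomial, AddMonoidAlgebra.coeff_single, Finsupp.sum_single_index (by simp), single_eq_monomial,
      pderiv_monomial, pderiv_monomial, Th_monomial, one_mul]
    have e1 : (monomial (m - Finsupp.single i 1) ((m i : k)))
        = (m i : k) • monomial (m - Finsupp.single i 1) (1:k) := by
      rw [smul_monomial, smul_eq_mul, mul_one]
    have e2 : antipodeH k n (c * ((m i : ℕ) : MvPolynomial (Fin n) k)) * g
        = (m i : ℕ) • (antipodeH k n c * g) := by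
      rw [map_mul, map_natCast, nsmul_eq_mul]
      ring
    rw [e1, e2, map_smul, map_nsmul, smul_mul_assoc, mul_smul_comm,
      Nat.cast_smul_eq_nsmul]
  | add p q hp hq =>
    rw [AddMonoidAlgebra.coeff_add, Finsupp.sum_add_index' (by simp) (fun m c1 c2 => by simp only [map_add, add_mul, mul_add]),
      hp, hq, map_add, Th, Th, Th,
      AddMonoidAlgebra.coeff_add, Finsupp.sum_add_index' (by simp) (fun m c1 c2 => by simp only [map_add, add_mul, mul_add])]

lemma K2 (Q : MvPolynomial (Fin n) (MvPolynomial (Fin n) k)) :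
    (Finsupp.sum (AddMonoidAlgebra.coeff Q) fun m c => a (monomial m 1) * b (antipodeH k n (pderiv i c) * g))
      = Th a b g ((sumAlgEquiv k (Fin n) (Fin n))
          (pderiv (Sum.inr i) ((sumAlgEquiv k (Fin n) (Fin n)).symm Q))) := by
  induction Q using MvPolynomial.induction_on' with
  | monomial m c =>
    rw [← single_eq_monomial, AddMonoidAlgebra.coeff_single, Finsupp.sum_single_index (by simp), single_eq_monomial,
      pderiv_inr_symm, AlgEquiv.apply_symm_apply, Th_monomial]
  | add p q hp hq =>
    rw [AddMonoidAlgebra.coeff_add, Finsupp.sum_add_index' (by simp) (fun m c1 c2 => by simp only [map_add, add_mul, mul_add]),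
      hp, hq, map_add, map_add, map_add, Th, Th, Th,
      AddMonoidAlgebra.coeff_add, Finsupp.sum_add_index' (by simp) (fun m c1 c2 => by simp only [map_add, add_mul, mul_add])]

lemma key (f : MvPolynomial (Fin n) k) :
    (Finsupp.sum (AddMonoidAlgebra.coeff (sweedler f)) fun m c => a (pderiv i (monomial m 1)) * b (antipodeH k n c * g))
      = Finsupp.sum (AddMonoidAlgebra.coeff (sweedler f)) fun m c =>
          a (monomial m 1) * b (antipodeH k n (pderiv i c) * g) := by
  rw [K1, K2]
  congr 1
  have hsymm : (sumAlgEquiv k (Fin n) (Fin n)).symm (sweedler f) = phiH k n f :=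
    AlgEquiv.symm_apply_apply _ _
  rw [hsymm, (pderiv_phiH i f).2, ← (pderiv_phiH i f).1, ← _root_.pderiv_sumAlgEquiv]
  rfl

end ConfHelpers

end Helpers

/-- If `a, b ∈ F(A)` are continuous translation-invariant maps, then `a ₍f₎ b` is again
translation-invariant: `(a ₍f₎ b)(∂g/∂Tᵢ) = ∂ᵢ((a ₍f₎ b)(g))`. -/
theorem confProd_translation_invariant (k : Type*) [Field k] [CharZero k] (n : ℕ)
    (A : Type*) [Ring A] [Algebra k A] [TopologicalSpace A] [IsTopologicalRing A]
    (D : Fin n → A → A)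
    (hDcont : ∀ i, Continuous (D i))
    (hDadd : ∀ i x y, D i (x + y) = D i x + D i y)
    (hDleib : ∀ i x y, D i (x * y) = D i x * y + x * D i y)
    (hDcomm : ∀ i j, D i ∘ D j = D j ∘ D i)
    (a b : MvPolynomial (Fin n) k →ₗ[k] A)
    (hacont : @Continuous _ _ (Htop k n) _ a)
    (hbcont : @Continuous _ _ (Htop k n) _ b)
    (hainv : ∀ (i : Fin n) (f : MvPolynomial (Fin n) k), a (pderiv i f) = D i (a f))
    (hbinv : ∀ (i : Fin n) (f : MvPolynomial (Fin n) k), b (pderiv i f) = D i (b f)) :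
    ∀ (f : MvPolynomial (Fin n) k) (i : Fin n) (g : MvPolynomial (Fin n) k),
      confProd a b f (pderiv i g) = D i (confProd a b f g) := by
  intro f i g
  classical
  have happ : ∀ h : MvPolynomial (Fin n) k, confProd a b f h
      = ∑ m ∈ (sweedler f).support,
        a (monomial m 1) * b (antipodeH k n (coeff m (sweedler f)) * h) := by
    intro h
    simp only [confProd, LinearMap.sum_apply, LinearMap.comp_apply, LinearMap.mulLeft_apply]
  let Dh : A →+ A := AddMonoidHom.mk' (D i) (hDadd i)
  have hDh : ∀ x, D i x = Dh x := fun _ => rfl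
  rw [happ, happ, hDh, map_sum]
  have hterm : ∀ m ∈ (sweedler f).support,
      Dh (a (monomial m 1) * b (antipodeH k n (coeff m (sweedler f)) * g))
      = a (pderiv i (monomial m 1)) * b (antipodeH k n (coeff m (sweedler f)) * g)
        - a (monomial m 1) * b (antipodeH k n (pderiv i (coeff m (sweedler f))) * g)
        + a (monomial m 1) * b (antipodeH k n (coeff m (sweedler f)) * pderiv i g) := by
    intro m _
    rw [← hDh, hDleib, ← hainv, ← hbinv, pderiv_mul, pderiv_antipodeH, neg_mul,
      map_add, map_neg, mul_add, mul_neg]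
    abel
  rw [Finset.sum_congr rfl hterm, Finset.sum_add_distrib, Finset.sum_sub_distrib]
  have hk : (∑ m ∈ (sweedler f).support,
        a (pderiv i (monomial m 1)) * b (antipodeH k n (coeff m (sweedler f)) * g))
      = ∑ m ∈ (sweedler f).support,
        a (monomial m 1) * b (antipodeH k n (pderiv i (coeff m (sweedler f))) * g) :=
    key a b g i f
  rw [hk, sub_self, zero_add]
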